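/- Let $0<\alpha<2$ and $n\geq 2$. If $\bar u:[0,\infty)\to[0,\infty)$ is a measurable nonnegative function satisfying $\int_1^{\infty} \bar u(r)/r^{1+\alpha}\,dr < \infty$, then for every $\delta>0$ the double integral $\int_1^{\infty} R^{-(1+\alpha+\delta)} \int_R^{\infty} \frac{R^{\alpha}\,\bar u(r)}{r\,(r^2-R^2)^{\alpha/2}}\,dr\,dR$ is finite. -/

import Mathlib

open MeasureTheory Set

lemma aux_inner_bound (α δ : ℝ) (hα0 : 0 < α) (hα2 : α < 2) (hδ : 0 < δ)
    (r : ℝ) (hr : 1 < r) :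
    ∫⁻ R in Ioi (1:ℝ),
        (if R < r then ENNReal.ofReal (R ^ (-(1+δ)) * (r ^ 2 - R ^ 2) ^ (-(α/2))) else 0)
      ≤ ENNReal.ofReal (((3/4:ℝ) ^ (-(α/2)) / δ + 2 ^ (1+δ) / (-(α/2) + 1)) * r ^ (-α)) := by
  have hr0 : (0:ℝ) < r := by linarith
  set q : ℝ := -(α/2) with hq
  set p : ℝ := -(1+δ) with hp
  have hq0 : q ≤ 0 := by rw [hq]; linarith
  have hq1 : (0:ℝ) < q + 1 := by rw [hq]; linarith
  have hp1 : p < -1 := by rw [hp]; linarith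
  set cA : ℝ := (3/4:ℝ) ^ q * r ^ (-α) with hcA
  set cB : ℝ := 2 ^ (1+δ) * r ^ p * r ^ q with hcB
  have hcA0 : 0 ≤ cA := by rw [hcA]; positivity
  have hcB0 : 0 ≤ cB := by rw [hcB]; positivity
  have hpoint : ∀ R ∈ Ioi (1:ℝ),
      (if R < r then ENNReal.ofReal (R ^ p * (r ^ 2 - R ^ 2) ^ q) else 0)
        ≤ ENNReal.ofReal (cA * R ^ p)
          + (Ioo (1:ℝ) r).indicator (fun R => ENNReal.ofReal (cB * (r - R) ^ q)) R := by
    intro R hR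
    simp only [mem_Ioi] at hR
    have hR0 : (0:ℝ) < R := by linarith
    by_cases hRr : R < r
    · rw [if_pos hRr]
      have hsub : (0:ℝ) < r ^ 2 - R ^ 2 := by nlinarith
      by_cases hhalf : R ≤ r / 2
      · refine le_trans ?_ le_self_add
        apply ENNReal.ofReal_le_ofReal
        have key : (3/4:ℝ) * r ^ 2 ≤ r ^ 2 - R ^ 2 := by nlinarith
        have h1 : (r ^ 2 - R ^ 2) ^ q ≤ ((3/4:ℝ) * r ^ 2) ^ q :=
          Real.rpow_le_rpow_of_nonpos (by positivity) key hq0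
        have h2 : ((3/4:ℝ) * r ^ 2) ^ q = (3/4:ℝ) ^ q * r ^ (-α) := by
          rw [Real.mul_rpow (by norm_num) (by positivity)]
          congr 1
          rw [← Real.rpow_natCast r 2, ← Real.rpow_mul hr0.le]
          congr 1
          rw [hq]; push_cast; ring
        calc R ^ p * (r ^ 2 - R ^ 2) ^ q ≤ R ^ p * ((3/4:ℝ) ^ q * r ^ (-α)) := by
              rw [← h2]; exact mul_le_mul_of_nonneg_left h1 (Real.rpow_nonneg hR0.le p)
          _ = cA * R ^ p := by rw [hcA]; ring
      · push_neg at hhalf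
        refine le_trans ?_ le_add_self
        rw [Set.indicator_of_mem (show R ∈ Ioo (1:ℝ) r from ⟨hR, hRr⟩)]
        apply ENNReal.ofReal_le_ofReal
        have hp0 : p ≤ 0 := by rw [hp]; linarith
        have h5 : R ^ p ≤ (r/2) ^ p :=
          Real.rpow_le_rpow_of_nonpos (by positivity) hhalf.le hp0
        have h6 : (r ^ 2 - R ^ 2) ^ q ≤ ((r - R) * r) ^ q :=
          Real.rpow_le_rpow_of_nonpos (by nlinarith) (by nlinarith) hq0
        have h2p : (2:ℝ) ^ p = ((2:ℝ) ^ (1+δ))⁻¹ := by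
          rw [hp, Real.rpow_neg (by norm_num)]
        have h7 : (r/2:ℝ) ^ p * ((r - R) * r) ^ q = cB * (r - R) ^ q := by
          rw [Real.div_rpow hr0.le (by norm_num), Real.mul_rpow (by linarith) hr0.le,
            h2p, hcB, div_inv_eq_mul]
          ring
        calc R ^ p * (r ^ 2 - R ^ 2) ^ q
            ≤ (r/2) ^ p * ((r - R) * r) ^ q :=
              mul_le_mul h5 h6 (Real.rpow_nonneg hsub.le q) (Real.rpow_nonneg (by positivity) p)
          _ = cB * (r - R) ^ q := h7
    · simp only [if_neg hRr]
      exact zero_le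
  have hmeasA : Measurable fun R : ℝ => ENNReal.ofReal (cA * R ^ p) :=
    (measurable_const.mul (measurable_id.pow_const p)).ennreal_ofReal
  have hIA : ∫⁻ R in Ioi (1:ℝ), ENNReal.ofReal (cA * R ^ p)
      ≤ ENNReal.ofReal ((3/4:ℝ) ^ q / δ * r ^ (-α)) := by
    have hint : IntegrableOn (fun R : ℝ => cA * R ^ p) (Ioi 1) :=
      (integrableOn_Ioi_rpow_of_lt hp1 one_pos).const_mul cA
    have hnn : (0:ℝ → ℝ) ≤ᵐ[volume.restrict (Ioi (1:ℝ))] fun R => cA * R ^ p := by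
      refine (ae_restrict_iff' measurableSet_Ioi).mpr (ae_of_all _ fun R hR => ?_)
      have : (0:ℝ) < R := lt_trans one_pos hR
      exact mul_nonneg hcA0 (Real.rpow_nonneg this.le p)
    rw [← ofReal_integral_eq_lintegral_ofReal hint hnn]
    apply ENNReal.ofReal_le_ofReal
    rw [integral_const_mul, integral_Ioi_rpow_of_lt hp1 one_pos, Real.one_rpow, hcA, hp]
    have hδ' : δ ≠ 0 := ne_of_gt hδ
    field_simp
    have h' : -(1+δ)+1 = -δ := by ring
    simp [h', hδ']
  have hIB : ∫⁻ R in Ioo (1:ℝ) r, ENNReal.ofReal (cB * (r - R) ^ q)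
      ≤ ENNReal.ofReal (2 ^ (1+δ) / (q + 1) * r ^ (-α)) := by
    have i0 : IntervalIntegrable (fun s : ℝ => s ^ q) volume 0 (r - 1) :=
      intervalIntegral.intervalIntegrable_rpow' (by rw [hq]; linarith)
    have i2 : IntervalIntegrable (fun x : ℝ => (r - x) ^ q) volume 1 r := by
      have := (i0.comp_sub_left r).symm
      simpa using this
    have i3 : IntegrableOn (fun x : ℝ => (r - x) ^ q) (Ioo 1 r) := by
      have := intervalIntegrable_iff.mp i2
      rw [uIoc_of_le hr.le] at this
      exact this.mono_set Ioo_subset_Ioc_self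
    have i4 : IntegrableOn (fun x : ℝ => cB * (r - x) ^ q) (Ioo 1 r) := i3.const_mul cB
    have hnn2 : (0:ℝ→ℝ) ≤ᵐ[volume.restrict (Ioo (1:ℝ) r)] fun x => cB * (r - x) ^ q := by
      refine (ae_restrict_iff' measurableSet_Ioo).mpr (ae_of_all _ fun x hx => ?_)
      exact mul_nonneg hcB0 (Real.rpow_nonneg (by linarith [hx.2] : (0:ℝ) ≤ r - x) q)
    rw [← ofReal_integral_eq_lintegral_ofReal i4 hnn2]
    apply ENNReal.ofReal_le_ofReal
    have hval : ∫ x in Ioo (1:ℝ) r, cB * (r - x) ^ q = cB * ((r-1) ^ (q+1) / (q+1)) := by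
      rw [← integral_Ioc_eq_integral_Ioo, ← intervalIntegral.integral_of_le hr.le,
        intervalIntegral.integral_const_mul]
      congr 1
      have hcs := intervalIntegral.integral_comp_sub_left (a := (1:ℝ)) (b := r)
        (fun s : ℝ => s ^ q) r
      rw [hcs, sub_self, integral_rpow (Or.inl (by rw [hq]; linarith)),
        Real.zero_rpow (ne_of_gt hq1)]
      ring
    rw [hval]
    have e1 : (r-1:ℝ) ^ (q+1) ≤ r ^ (q+1) :=
      Real.rpow_le_rpow (by linarith) (by linarith) hq1.le
    calc cB * ((r-1) ^ (q+1) / (q+1)) ≤ cB * (r ^ (q+1) / (q+1)) :=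
          mul_le_mul_of_nonneg_left ((div_le_div_iff_of_pos_right hq1).mpr e1) hcB0
      _ = 2 ^ (1+δ) / (q+1) * (r ^ p * r ^ q * r ^ (q+1)) := by rw [hcB]; ring
      _ ≤ 2 ^ (1+δ) / (q+1) * r ^ (-α) := by
          apply mul_le_mul_of_nonneg_left _
            (div_nonneg (Real.rpow_nonneg (by norm_num) _) hq1.le)
          rw [← Real.rpow_add hr0, ← Real.rpow_add hr0]
          exact Real.rpow_le_rpow_of_exponent_le hr.le (by rw [hp, hq]; linarith)
  calc ∫⁻ R in Ioi (1:ℝ),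
        (if R < r then ENNReal.ofReal (R ^ p * (r ^ 2 - R ^ 2) ^ q) else 0)
      ≤ ∫⁻ R in Ioi (1:ℝ), (ENNReal.ofReal (cA * R ^ p)
          + (Ioo (1:ℝ) r).indicator (fun R => ENNReal.ofReal (cB * (r - R) ^ q)) R) :=
        setLIntegral_mono' measurableSet_Ioi hpoint
    _ = (∫⁻ R in Ioi (1:ℝ), ENNReal.ofReal (cA * R ^ p))
          + ∫⁻ R in Ioo (1:ℝ) r, ENNReal.ofReal (cB * (r - R) ^ q) := by
        rw [lintegral_add_left hmeasA]
        congr 1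
        rw [lintegral_indicator measurableSet_Ioo,
          Measure.restrict_restrict measurableSet_Ioo,
          inter_eq_self_of_subset_left Ioo_subset_Ioi_self]
    _ ≤ ENNReal.ofReal ((3/4:ℝ) ^ q / δ * r ^ (-α))
          + ENNReal.ofReal (2 ^ (1+δ) / (q+1) * r ^ (-α)) := add_le_add hIA hIB
    _ = ENNReal.ofReal (((3/4:ℝ) ^ q / δ + 2 ^ (1+δ) / (q + 1)) * r ^ (-α)) := by
        rw [← ENNReal.ofReal_add
          (mul_nonneg (div_nonneg (Real.rpow_nonneg (by norm_num) q) hδ.le)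
            (Real.rpow_nonneg hr0.le _))
          (mul_nonneg (div_nonneg (Real.rpow_nonneg (by norm_num) _) hq1.le)
            (Real.rpow_nonneg hr0.le _))]
        congr 1
        ring


theorem stmt0 (n : ℕ) (hn : 2 ≤ n) (α : ℝ) (hα0 : 0 < α) (hα2 : α < 2)
    (u : ℝ → ℝ) (hmeas : Measurable u) (hnn : ∀ r, 0 ≤ r → 0 ≤ u r)
    (hint : ∫⁻ r in Ioi (1:ℝ), ENNReal.ofReal (u r / r ^ (1 + α)) < ⊤)
    (δ : ℝ) (hδ : 0 < δ) :
    ∫⁻ R in Ioi (1:ℝ), ENNReal.ofReal (R ^ (-(1 + α + δ))) *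
      ∫⁻ r in Ioi R, ENNReal.ofReal (R ^ α * u r / (r * (r ^ 2 - R ^ 2) ^ (α / 2))) < ⊤ := by
  set C : ℝ := (3/4:ℝ) ^ (-(α/2)) / δ + 2 ^ (1+δ) / (-(α/2) + 1) with hC
  have hC0 : 0 ≤ C := by
    rw [hC]
    have h1 : (0:ℝ) < -(α/2) + 1 := by linarith
    exact add_nonneg (div_nonneg (Real.rpow_nonneg (by norm_num) _) hδ.le)
      (div_nonneg (Real.rpow_nonneg (by norm_num) _) h1.le)
  set H : ℝ → ℝ → ENNReal := fun R r =>
    if R < r then ENNReal.ofReal (u r / r) *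
      ENNReal.ofReal (R ^ (-(1+δ)) * (r ^ 2 - R ^ 2) ^ (-(α/2))) else 0 with hH
  -- Step 1: rewrite the integrand
  have step1 : ∫⁻ R in Ioi (1:ℝ), ENNReal.ofReal (R ^ (-(1 + α + δ))) *
      ∫⁻ r in Ioi R, ENNReal.ofReal (R ^ α * u r / (r * (r ^ 2 - R ^ 2) ^ (α / 2)))
      = ∫⁻ R in Ioi (1:ℝ), ∫⁻ r in Ioi (1:ℝ), H R r := by
    apply setLIntegral_congr_fun measurableSet_Ioi
    intro R hR
    simp only [mem_Ioi] at hR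
    have hR0 : (0:ℝ) < R := by linarith
    calc ENNReal.ofReal (R ^ (-(1 + α + δ))) *
          ∫⁻ r in Ioi R, ENNReal.ofReal (R ^ α * u r / (r * (r ^ 2 - R ^ 2) ^ (α / 2)))
        = ∫⁻ r in Ioi R, ENNReal.ofReal (R ^ (-(1 + α + δ))) *
            ENNReal.ofReal (R ^ α * u r / (r * (r ^ 2 - R ^ 2) ^ (α / 2))) :=
          (lintegral_const_mul' _ _ ENNReal.ofReal_ne_top).symm
      _ = ∫⁻ r in Ioi R, H R r := by
          apply setLIntegral_congr_fun measurableSet_Ioi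
          intro r hr
          simp only [mem_Ioi] at hr
          have hr0 : (0:ℝ) < r := by linarith
          have hsub : (0:ℝ) < r ^ 2 - R ^ 2 := by nlinarith
          rw [hH]
          simp only [if_pos hr]
          rw [← ENNReal.ofReal_mul (Real.rpow_nonneg hR0.le _),
            ← ENNReal.ofReal_mul (div_nonneg (hnn r hr0.le) hr0.le)]
          congr 1
          have hkey : R ^ (-(1 + δ)) = R ^ (-(1 + α + δ)) * R ^ α := by
            rw [← Real.rpow_add hR0]; congr 1; ring
          rw [Real.rpow_neg hsub.le, hkey]
          ring
      _ = ∫⁻ r in Ioi (1:ℝ), H R r := by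
          have hind : ∀ r : ℝ, H R r = (Ioi R).indicator (fun r => ENNReal.ofReal (u r / r) *
              ENNReal.ofReal (R ^ (-(1+δ)) * (r ^ 2 - R ^ 2) ^ (-(α/2)))) r := fun r => by
            rw [hH]; simp [Set.indicator_apply]
          simp only [hind]
          rw [lintegral_indicator measurableSet_Ioi, lintegral_indicator measurableSet_Ioi,
            Measure.restrict_restrict measurableSet_Ioi,
            Measure.restrict_restrict measurableSet_Ioi, inter_self,
            inter_eq_self_of_subset_left (Ioi_subset_Ioi hR.le)]
  -- Step 2: Tonelli
  have hmeasH : Measurable (Function.uncurry H) := by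
    have : Function.uncurry H = fun p : ℝ × ℝ =>
        if p.1 < p.2 then ENNReal.ofReal (u p.2 / p.2) *
          ENNReal.ofReal (p.1 ^ (-(1+δ)) * (p.2 ^ 2 - p.1 ^ 2) ^ (-(α/2))) else 0 := rfl
    rw [this]
    apply Measurable.ite (measurableSet_lt measurable_fst measurable_snd)
    · exact (((hmeas.comp measurable_snd).div measurable_snd).ennreal_ofReal).mul
        (((measurable_fst.pow_const _).mul
          (((measurable_snd.pow_const 2).sub (measurable_fst.pow_const 2)).pow_const
            _)).ennreal_ofReal)
    · exact measurable_const
  have step2 : ∫⁻ R in Ioi (1:ℝ), ∫⁻ r in Ioi (1:ℝ), H R r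
      = ∫⁻ r in Ioi (1:ℝ), ∫⁻ R in Ioi (1:ℝ), H R r :=
    lintegral_lintegral_swap hmeasH.aemeasurable
  -- Step 3: bound the inner integral
  have step3 : ∀ r ∈ Ioi (1:ℝ), ∫⁻ R in Ioi (1:ℝ), H R r
      ≤ ENNReal.ofReal C * ENNReal.ofReal (u r / r ^ (1 + α)) := by
    intro r hr
    simp only [mem_Ioi] at hr
    have hr0 : (0:ℝ) < r := by linarith
    have e1 : ∫⁻ R in Ioi (1:ℝ), H R r = ENNReal.ofReal (u r / r) *
        ∫⁻ R in Ioi (1:ℝ),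
          (if R < r then ENNReal.ofReal (R ^ (-(1+δ)) * (r ^ 2 - R ^ 2) ^ (-(α/2))) else 0) := by
      rw [← lintegral_const_mul' _ _ ENNReal.ofReal_ne_top]
      apply setLIntegral_congr_fun measurableSet_Ioi
      intro R _
      rw [hH]
      by_cases h : R < r <;> simp [h]
    rw [e1]
    calc ENNReal.ofReal (u r / r) * ∫⁻ R in Ioi (1:ℝ),
          (if R < r then ENNReal.ofReal (R ^ (-(1+δ)) * (r ^ 2 - R ^ 2) ^ (-(α/2))) else 0)
        ≤ ENNReal.ofReal (u r / r) * ENNReal.ofReal (C * r ^ (-α)) :=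
          mul_le_mul_right (aux_inner_bound α δ hα0 hα2 hδ r hr) _
      _ = ENNReal.ofReal C * ENNReal.ofReal (u r / r ^ (1 + α)) := by
          rw [← ENNReal.ofReal_mul (div_nonneg (hnn r hr0.le) hr0.le),
            ← ENNReal.ofReal_mul hC0]
          congr 1
          rw [Real.rpow_neg hr0.le, Real.rpow_add hr0, Real.rpow_one]
          ring
  rw [step1, step2]
  calc ∫⁻ r in Ioi (1:ℝ), ∫⁻ R in Ioi (1:ℝ), H R r
      ≤ ∫⁻ r in Ioi (1:ℝ), ENNReal.ofReal C * ENNReal.ofReal (u r / r ^ (1 + α)) :=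
        setLIntegral_mono' measurableSet_Ioi step3
    _ = ENNReal.ofReal C * ∫⁻ r in Ioi (1:ℝ), ENNReal.ofReal (u r / r ^ (1 + α)) :=
        lintegral_const_mul' _ _ ENNReal.ofReal_ne_top
    _ < ⊤ := ENNReal.mul_lt_top ENNReal.ofReal_lt_top hint
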